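/- Let g be a continuous probability density on (0,∞) with s, τ polynomial functions satisfying (s·g)′(x) = τ(x)g(x) for all x > 0, s(x) > 0 for all x > 0, τ strictly decreasing on (0,∞) with a unique zero α ∈ (0,∞), and lim_{t→0⁺} s(t)g(t) = lim_{t→∞} s(t)g(t) = 0. Let h : (0,∞) → ℝ be bounded and continuous, m_h = ∫₀^∞ h(t)g(t) dt, and f_h(x) = (1/(s(x)g(x))) ∫₀ˣ g(t)(h(t) − m_h) dt. Then sup_{x>0} |f_h(x)| ≤ M · sup_{x>0} |h(x) − m_h|, where M = max( (1/(s(α)g(α))) ∫₀^α g(t) dt , (1/(s(α)g(α))) ∫_α^∞ g(t) dt ). -/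

import Mathlib

open MeasureTheory Set Filter

private lemma steinAux_mono {F F' : ℝ → ℝ} {a b : ℝ} (ha : 0 < a)
    (hF : ∀ x ∈ Set.Ioi (0:ℝ), HasDerivAt F (F' x) x)
    (h' : ∀ x ∈ Set.Icc a b, 0 ≤ F' x) : MonotoneOn F (Set.Icc a b) := by
  apply monotoneOn_of_deriv_nonneg (convex_Icc a b)
  · intro y hy
    exact (hF y (lt_of_lt_of_le ha hy.1)).continuousAt.continuousWithinAt
  · intro y hy
    have hy' : y ∈ Set.Icc a b := interior_subset hy
    exact (hF y (lt_of_lt_of_le ha hy'.1)).differentiableAt.differentiableWithinAt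
  · intro y hy
    have hy' : y ∈ Set.Icc a b := interior_subset hy
    rw [(hF y (lt_of_lt_of_le ha hy'.1)).deriv]
    exact h' y hy'

private lemma steinAux_anti {F F' : ℝ → ℝ} {a b : ℝ} (ha : 0 < a)
    (hF : ∀ x ∈ Set.Ioi (0:ℝ), HasDerivAt F (F' x) x)
    (h' : ∀ x ∈ Set.Icc a b, F' x ≤ 0) : AntitoneOn F (Set.Icc a b) := by
  apply antitoneOn_of_deriv_nonpos (convex_Icc a b)
  · intro y hy
    exact (hF y (lt_of_lt_of_le ha hy.1)).continuousAt.continuousWithinAt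
  · intro y hy
    have hy' : y ∈ Set.Icc a b := interior_subset hy
    exact (hF y (lt_of_lt_of_le ha hy'.1)).differentiableAt.differentiableWithinAt
  · intro y hy
    have hy' : y ∈ Set.Icc a b := interior_subset hy
    rw [(hF y (lt_of_lt_of_le ha hy'.1)).deriv]
    exact h' y hy'

/-- uniform bound on the solution of the Stein equation:
`sup_{x>0} |f_h(x)| ≤ M · sup_{x>0} |h(x) − m_h|` with
`M = max( (s(α)g(α))⁻¹ ∫₀^α g , (s(α)g(α))⁻¹ ∫_α^∞ g )`.
(The supremum bound is expressed via arbitrary upper bounds `B` of `|h − m_h|`.) -/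
theorem stein_solution_uniform_bound
    (g : ℝ → ℝ) (s τ : Polynomial ℝ)
    (hg_pos : ∀ x ∈ Set.Ioi (0 : ℝ), 0 < g x)
    (hg_cont : ContinuousOn g (Set.Ioi 0))
    (hg_int : ∫ x in Set.Ioi (0 : ℝ), g x = 1)
    (hode : ∀ x ∈ Set.Ioi (0 : ℝ),
      HasDerivAt (fun y => s.eval y * g y) (τ.eval x * g x) x)
    (hs_pos : ∀ x ∈ Set.Ioi (0 : ℝ), 0 < s.eval x)
    (hτ_anti : StrictAntiOn (fun x => τ.eval x) (Set.Ioi 0))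
    (α : ℝ) (hα_pos : 0 < α) (hα_zero : τ.eval α = 0)
    (hα_unique : ∀ x ∈ Set.Ioi (0 : ℝ), τ.eval x = 0 → x = α)
    (hsg_lim0 : Tendsto (fun t => s.eval t * g t) (nhdsWithin 0 (Set.Ioi 0)) (nhds 0))
    (hsg_limtop : Tendsto (fun t => s.eval t * g t) atTop (nhds 0))
    (h : ℝ → ℝ) (hh_cont : ContinuousOn h (Set.Ioi 0))
    (hh_bdd : ∃ C, ∀ x ∈ Set.Ioi (0 : ℝ), |h x| ≤ C) :
    let m := ∫ t in Set.Ioi (0 : ℝ), h t * g t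
    let fh : ℝ → ℝ := fun x => (s.eval x * g x)⁻¹ * ∫ t in (0 : ℝ)..x, g t * (h t - m)
    let M := max ((s.eval α * g α)⁻¹ * ∫ t in (0 : ℝ)..α, g t)
                 ((s.eval α * g α)⁻¹ * ∫ t in Set.Ioi α, g t)
    ∀ B : ℝ, (∀ x ∈ Set.Ioi (0 : ℝ), |h x - m| ≤ B) →
      ∀ x ∈ Set.Ioi (0 : ℝ), |fh x| ≤ M * B := by
  intro m fh M B hB x hx
  have hm : m = ∫ t in Set.Ioi (0 : ℝ), h t * g t := rfl
  set p : ℝ → ℝ := fun y => s.eval y * g y with hpdef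
  set G : ℝ → ℝ := fun y => ∫ t in (0 : ℝ)..y, g t with hGdef
  set T : ℝ → ℝ := fun y => ∫ t in Set.Ioi y, g t with hTdef
  have hM : M = max ((p α)⁻¹ * G α) ((p α)⁻¹ * T α) := rfl
  have hfhx : fh x = (p x)⁻¹ * ∫ t in (0 : ℝ)..x, g t * (h t - m) := rfl
  have hp_pos : ∀ y ∈ Set.Ioi (0:ℝ), 0 < p y := fun y hy => mul_pos (hs_pos y hy) (hg_pos y hy)
  have hgnn : ∀ t ∈ Set.Ioi (0:ℝ), 0 ≤ g t := fun t ht => (hg_pos t ht).le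
  have hgint : IntegrableOn g (Set.Ioi 0) := by
    by_contra hc
    rw [MeasureTheory.integral_undef hc] at hg_int
    norm_num at hg_int
  have hB0 : 0 ≤ B := le_trans (abs_nonneg _) (hB 1 (by norm_num))
  obtain ⟨C, hC⟩ := hh_bdd
  have hφmeas : AEStronglyMeasurable (fun t => g t * (h t - m)) (volume.restrict (Set.Ioi 0)) :=
    (hg_cont.mul (hh_cont.sub continuousOn_const)).aestronglyMeasurable measurableSet_Ioi
  have hφint : IntegrableOn (fun t => g t * (h t - m)) (Set.Ioi 0) := by
    refine MeasureTheory.Integrable.mono' (hgint.const_mul B) hφmeas ?_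
    refine (MeasureTheory.ae_restrict_iff' measurableSet_Ioi).2 (Filter.Eventually.of_forall ?_)
    intro t ht
    have hb := hB t ht
    have hg0 := hgnn t ht
    calc ‖g t * (h t - m)‖ = g t * |h t - m| := by
          rw [norm_mul, Real.norm_eq_abs, Real.norm_eq_abs, abs_of_nonneg hg0]
    _ ≤ g t * B := mul_le_mul_of_nonneg_left hb hg0
    _ = B * g t := mul_comm _ _
  have hhgint : IntegrableOn (fun t => h t * g t) (Set.Ioi 0) := by
    refine MeasureTheory.Integrable.mono' (hgint.const_mul C)
      ((hh_cont.mul hg_cont).aestronglyMeasurable measurableSet_Ioi) ?_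
    refine (MeasureTheory.ae_restrict_iff' measurableSet_Ioi).2 (Filter.Eventually.of_forall ?_)
    intro t ht
    rw [norm_mul, Real.norm_eq_abs, Real.norm_eq_abs, abs_of_nonneg (hgnn t ht)]
    exact mul_le_mul_of_nonneg_right (hC t ht) (hgnn t ht)
  have hsum : ∫ t in Set.Ioi (0:ℝ), g t * (h t - m) = 0 := by
    have e : (fun t => g t * (h t - m)) = fun t => h t * g t - m * g t := by
      funext t; ring
    rw [e, MeasureTheory.integral_sub hhgint (hgint.const_mul m),
      MeasureTheory.integral_const_mul, hg_int, ← hm]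
    ring
  have hGIoc : ∀ y : ℝ, 0 ≤ y → G y = ∫ t in Set.Ioc 0 y, g t := fun y hy =>
    intervalIntegral.integral_of_le hy
  have hGint' : ∀ y : ℝ, IntegrableOn g (Set.Ioc 0 y) := fun y =>
    hgint.mono_set Set.Ioc_subset_Ioi_self
  have hG_nonneg : ∀ y : ℝ, 0 ≤ y → 0 ≤ G y := by
    intro y hy
    rw [hGIoc y hy]
    exact MeasureTheory.setIntegral_nonneg measurableSet_Ioc (fun t ht => hgnn t ht.1)
  have hT_nonneg : ∀ y : ℝ, 0 ≤ y → 0 ≤ T y := fun y hy =>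
    MeasureTheory.setIntegral_nonneg measurableSet_Ioi (fun t ht => hgnn t (lt_of_le_of_lt hy ht))
  have hsplitg : ∀ y : ℝ, 0 < y → G y + T y = 1 := by
    intro y hy
    have e := MeasureTheory.setIntegral_union (f := g) (μ := volume)
      (Set.Ioc_disjoint_Ioi le_rfl) measurableSet_Ioi (hGint' y)
      (hgint.mono_set (Set.Ioi_subset_Ioi hy.le))
    rw [Set.Ioc_union_Ioi_eq_Ioi hy.le, hg_int] at e
    rw [hGIoc y hy.le]
    simp only [hTdef]
    linarith
  have hφsplit : ∀ y : ℝ, 0 < y →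
      (∫ t in Set.Ioc 0 y, g t * (h t - m)) + (∫ t in Set.Ioi y, g t * (h t - m)) = 0 := by
    intro y hy
    have e := MeasureTheory.setIntegral_union (f := fun t => g t * (h t - m)) (μ := volume)
      (Set.Ioc_disjoint_Ioi le_rfl) measurableSet_Ioi (hφint.mono_set Set.Ioc_subset_Ioi_self)
      (hφint.mono_set (Set.Ioi_subset_Ioi hy.le))
    rw [Set.Ioc_union_Ioi_eq_Ioi hy.le, hsum] at e
    linarith
  -- derivatives
  have hG_deriv : ∀ y ∈ Set.Ioi (0:ℝ), HasDerivAt G (g y) y := by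
    intro y hy
    have hii : IntervalIntegrable g volume 0 y := by
      rw [intervalIntegrable_iff, Set.uIoc_of_le (le_of_lt hy)]
      exact hGint' y
    have hms := hg_cont.stronglyMeasurableAtFilter isOpen_Ioi y hy (μ := volume)
    have hca : ContinuousAt g y := hg_cont.continuousAt (Ioi_mem_nhds hy)
    rw [hGdef]
    exact intervalIntegral.integral_hasDerivAt_right hii hms hca
  have hT_deriv : ∀ y ∈ Set.Ioi (0:ℝ), HasDerivAt T (-(g y)) y := by
    intro y hy
    have h1 : HasDerivAt (fun z => 1 - G z) (-(g y)) y := (hG_deriv y hy).const_sub 1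
    apply h1.congr_of_eventuallyEq
    filter_upwards [Ioi_mem_nhds hy] with z hz
    have := hsplitg z hz
    simp only [hTdef]
    linarith
  set Φ : ℝ → ℝ := fun y => G α * p y - p α * G y with hΦdef
  set X : ℝ → ℝ := fun y => T α * p y - p α * T y with hXdef
  have hΦ_deriv : ∀ y ∈ Set.Ioi (0:ℝ),
      HasDerivAt Φ (g y * (G α * τ.eval y - p α)) y := by
    intro y hy
    have d := ((hode y hy).const_mul (G α)).sub ((hG_deriv y hy).const_mul (p α))
    rw [hΦdef]
    exact d.congr_deriv (by ring)
  have hX_deriv : ∀ y ∈ Set.Ioi (0:ℝ),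
      HasDerivAt X (g y * (T α * τ.eval y + p α)) y := by
    intro y hy
    have d := ((hode y hy).const_mul (T α)).sub ((hT_deriv y hy).const_mul (p α))
    rw [hXdef]
    exact d.congr_deriv (by ring)
  -- limits
  have hG0 : Tendsto G (nhdsWithin 0 (Set.Ioi 0)) (nhds 0) := by
    have hint : IntegrableOn g (Set.Icc 0 1) :=
      (integrableOn_Icc_iff_integrableOn_Ioc (f := g)).2 (hGint' 1)
    have c := (intervalIntegral.continuousOn_primitive hint) 0 (Set.left_mem_Icc.2 zero_le_one)
    have c' : Tendsto (fun y => ∫ t in Set.Ioc 0 y, g t) (nhdsWithin 0 (Set.Icc 0 1)) (nhds 0) := by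
      have e0 : (∫ t in Set.Ioc (0:ℝ) 0, g t) = 0 := by simp
      simpa [ContinuousWithinAt, e0] using c
    have c2 : Tendsto (fun y => ∫ t in Set.Ioc 0 y, g t) (nhdsWithin 0 (Set.Ioc 0 1)) (nhds 0) :=
      c'.mono_left (nhdsWithin_mono 0 Set.Ioc_subset_Icc_self)
    rw [nhdsWithin_Ioc_eq_nhdsGT zero_lt_one] at c2
    apply c2.congr'
    filter_upwards [self_mem_nhdsWithin] with y hy
    exact (hGIoc y (le_of_lt hy)).symm
  have hGtop : Tendsto G atTop (nhds 1) := by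
    have t1 := MeasureTheory.intervalIntegral_tendsto_integral_Ioi 0 hgint tendsto_id
    rw [hg_int] at t1
    rw [hGdef]
    exact t1
  have hTtop : Tendsto T atTop (nhds 0) := by
    have h1 : Tendsto (fun y => 1 - G y) atTop (nhds 0) := by
      have := hGtop.const_sub 1
      simpa using this
    apply h1.congr'
    filter_upwards [eventually_gt_atTop 0] with y hy
    have := hsplitg y hy
    linarith
  have hΦ0 : Tendsto Φ (nhdsWithin 0 (Set.Ioi 0)) (nhds 0) := by
    have t1 := (hsg_lim0.const_mul (G α)).sub (hG0.const_mul (p α))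
    rw [hΦdef]
    simpa using t1
  have hXtop : Tendsto X atTop (nhds 0) := by
    have t1 := (hsg_limtop.const_mul (T α)).sub (hTtop.const_mul (p α))
    rw [hXdef]
    simpa using t1
  -- nonnegativity of Φ on (0, α] and X on [α, ∞)
  have hτ_anti' := hτ_anti.antitoneOn
  have hpα : 0 < p α := hp_pos α hα_pos
  have hGα : 0 ≤ G α := hG_nonneg α hα_pos.le
  have hTα : 0 ≤ T α := hT_nonneg α hα_pos.le
  have hΦ_nonneg : ∀ y : ℝ, 0 < y → y ≤ α → 0 ≤ Φ y := by
    intro y hy hyα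
    have hΦα : Φ α = 0 := by
      simp only [hΦdef]
      ring
    rcases le_or_gt (G α * τ.eval y - p α) 0 with hψ | hψ
    · have anti : AntitoneOn Φ (Set.Icc y α) := by
        apply steinAux_anti hy hΦ_deriv
        intro z hz
        have hz0 : (0:ℝ) < z := lt_of_lt_of_le hy hz.1
        have hτz : τ.eval z ≤ τ.eval y := hτ_anti' hy hz0 hz.1
        have hψz : G α * τ.eval z - p α ≤ 0 := by nlinarith
        have := hgnn z hz0
        nlinarith
      have h2 := anti (Set.left_mem_Icc.2 hyα) (Set.right_mem_Icc.2 hyα) hyα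
      linarith [hΦα]
    · have hev : ∀ᶠ z in nhdsWithin 0 (Set.Ioi 0), Φ z ≤ Φ y := by
        filter_upwards [Ioo_mem_nhdsGT_of_mem (Set.left_mem_Ico.2 hy)] with z hz
        have hz0 := hz.1
        have hzy := hz.2
        have mono : MonotoneOn Φ (Set.Icc z y) := by
          apply steinAux_mono hz0 hΦ_deriv
          intro w hw
          have hw0 : 0 < w := lt_of_lt_of_le hz0 hw.1
          have hτw : τ.eval y ≤ τ.eval w := hτ_anti' hw0 hy hw.2
          have hψw : 0 ≤ G α * τ.eval w - p α := by nlinarith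
          exact mul_nonneg (hgnn w hw0) hψw
        exact mono (Set.left_mem_Icc.2 hzy.le) (Set.right_mem_Icc.2 hzy.le) hzy.le
      exact le_of_tendsto hΦ0 hev
  have hX_nonneg : ∀ y : ℝ, α ≤ y → 0 ≤ X y := by
    intro y hyα
    have hy0 : 0 < y := lt_of_lt_of_le hα_pos hyα
    have hXα : X α = 0 := by
      simp only [hXdef]
      ring
    rcases le_or_gt 0 (T α * τ.eval y + p α) with hω | hω
    · have mono : MonotoneOn X (Set.Icc α y) := by
        apply steinAux_mono hα_pos hX_deriv
        intro w hw
        have hw0 : 0 < w := lt_of_lt_of_le hα_pos hw.1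
        have hτw : τ.eval y ≤ τ.eval w := hτ_anti' hw0 hy0 hw.2
        have hωw : 0 ≤ T α * τ.eval w + p α := by nlinarith
        exact mul_nonneg (hgnn w hw0) hωw
      have h2 := mono (Set.left_mem_Icc.2 hyα) (Set.right_mem_Icc.2 hyα) hyα
      linarith [hXα]
    · have hev : ∀ᶠ z in atTop, X z ≤ X y := by
        filter_upwards [eventually_ge_atTop y] with z hz
        have anti : AntitoneOn X (Set.Icc y z) := by
          apply steinAux_anti hy0 hX_deriv
          intro w hw
          have hw0 : 0 < w := lt_of_lt_of_le hy0 hw.1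
          have hτw : τ.eval w ≤ τ.eval y := hτ_anti' hy0 hw0 hw.1
          have hωw : T α * τ.eval w + p α ≤ 0 := by nlinarith
          have := hgnn w hw0
          nlinarith
        exact anti (Set.left_mem_Icc.2 hz) (Set.right_mem_Icc.2 hz) hz
      exact le_of_tendsto hXtop hev
  -- bound on integrals of g*(h-m) over subsets
  have hφabs : IntegrableOn (fun t => |g t * (h t - m)|) (Set.Ioi 0) := hφint.abs
  have hbound : ∀ S : Set ℝ, MeasurableSet S → S ⊆ Set.Ioi 0 →
      |∫ t in S, g t * (h t - m)| ≤ B * ∫ t in S, g t := by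
    intro S hSm hS
    calc |∫ t in S, g t * (h t - m)| ≤ ∫ t in S, |g t * (h t - m)| := by
          simpa only [Real.norm_eq_abs] using
            MeasureTheory.norm_integral_le_integral_norm (μ := volume.restrict S)
              (f := fun t => g t * (h t - m))
    _ ≤ ∫ t in S, B * g t := by
        apply MeasureTheory.setIntegral_mono_on (hφabs.mono_set hS)
          ((hgint.mono_set hS).const_mul B) hSm
        intro t ht
        have ht0 := hS ht
        rw [abs_mul, abs_of_nonneg (hgnn t ht0)]
        calc g t * |h t - m| ≤ g t * B := mul_le_mul_of_nonneg_left (hB t ht0) (hgnn t ht0)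
        _ = B * g t := mul_comm _ _
    _ = B * ∫ t in S, g t := MeasureTheory.integral_const_mul B g
  -- final assembly
  have hpx : 0 < p x := hp_pos x hx
  rw [hfhx, hM, intervalIntegral.integral_of_le (le_of_lt hx)]
  rcases le_total x α with hxα | hαx
  · have h1 : |∫ t in Set.Ioc 0 x, g t * (h t - m)| ≤ B * G x := by
      have hb := hbound (Set.Ioc 0 x) measurableSet_Ioc Set.Ioc_subset_Ioi_self
      rwa [← hGIoc x (le_of_lt hx)] at hb
    have hratio : G x * p α ≤ G α * p x := by
      have h0 := hΦ_nonneg x hx hxα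
      simp only [hΦdef] at h0
      linarith
    calc |(p x)⁻¹ * ∫ t in Set.Ioc 0 x, g t * (h t - m)|
        = (p x)⁻¹ * |∫ t in Set.Ioc 0 x, g t * (h t - m)| := by
          rw [abs_mul, abs_of_nonneg (inv_nonneg.2 hpx.le)]
    _ ≤ (p x)⁻¹ * (B * G x) := mul_le_mul_of_nonneg_left h1 (inv_nonneg.2 hpx.le)
    _ = B * (G x / p x) := by
        rw [div_eq_mul_inv]; ring
    _ ≤ B * (G α / p α) := by
        apply mul_le_mul_of_nonneg_left _ hB0
        rw [div_le_div_iff₀ hpx hpα]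
        linarith
    _ ≤ max ((p α)⁻¹ * G α) ((p α)⁻¹ * T α) * B := by
        have e : G α / p α = (p α)⁻¹ * G α := by
          rw [div_eq_mul_inv]; ring
        rw [e, mul_comm B]
        exact mul_le_mul_of_nonneg_right (le_max_left _ _) hB0
  · have hflip : (∫ t in Set.Ioc 0 x, g t * (h t - m))
        = -∫ t in Set.Ioi x, g t * (h t - m) := by
      have := hφsplit x hx
      linarith
    have h1 : |∫ t in Set.Ioc 0 x, g t * (h t - m)| ≤ B * T x := by
      rw [hflip, abs_neg]
      exact hbound (Set.Ioi x) measurableSet_Ioi (Set.Ioi_subset_Ioi (le_of_lt hx))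
    have hratio : T x * p α ≤ T α * p x := by
      have h0 := hX_nonneg x hαx
      simp only [hXdef] at h0
      linarith
    calc |(p x)⁻¹ * ∫ t in Set.Ioc 0 x, g t * (h t - m)|
        = (p x)⁻¹ * |∫ t in Set.Ioc 0 x, g t * (h t - m)| := by
          rw [abs_mul, abs_of_nonneg (inv_nonneg.2 hpx.le)]
    _ ≤ (p x)⁻¹ * (B * T x) := mul_le_mul_of_nonneg_left h1 (inv_nonneg.2 hpx.le)
    _ = B * (T x / p x) := by
        rw [div_eq_mul_inv]; ring
    _ ≤ B * (T α / p α) := by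
        apply mul_le_mul_of_nonneg_left _ hB0
        rw [div_le_div_iff₀ hpx hpα]
        linarith
    _ ≤ max ((p α)⁻¹ * G α) ((p α)⁻¹ * T α) * B := by
        have e : T α / p α = (p α)⁻¹ * T α := by
          rw [div_eq_mul_inv]; ring
        rw [e, mul_comm B]
        exact mul_le_mul_of_nonneg_right (le_max_right _ _) hB0
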